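/- Let $\Lambda$ be a finite dimensional algebra with global dimension 2, and let $0 \to \Lambda \xrightarrow{f} I_0$ with $I_0$ the injective envelope of $\Lambda$ and $I_0$ projective. Then the projective dimension of the socle of $\mathrm{Im}\,f$'s cokernel, i.e., $\mathrm{pd}_\Lambda(\mathrm{soc}(I_0/\Lambda))$, is at most 1. -/
import Mathlib


universe u

open CategoryTheory

section Defs

variable (R : Type u) [Ring R]

/-- `pdLE R n M` : the module `M` has projective dimension at most `n`. -/
def pdLE : ℕ → ModuleCat.{u} R → Prop
  | 0, M => Module.Projective R M
  | (n+1), M => ∃ (P : ModuleCat.{u} R) (f : P →ₗ[R] M),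
      Module.Projective R P ∧ Function.Surjective f ∧
      pdLE n (ModuleCat.of R (LinearMap.ker f))

/-- The projective dimension of a module, as an element of `ℕ∞` (`⊤` if no
finite projective resolution exists). -/
noncomputable def projDim (M : ModuleCat.{u} R) : ℕ∞ :=
  sInf ((↑) '' {n : ℕ | pdLE R n M})

/-- `idLE R n M` : the module `M` has injective dimension at most `n`. -/
def idLE : ℕ → ModuleCat.{u} R → Prop
  | 0, M => Module.Injective R M
  | (n+1), M => ∃ (I : ModuleCat.{u} R) (f : M →ₗ[R] I),
      Module.Injective R I ∧ Function.Injective f ∧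
      idLE n (ModuleCat.of R (I ⧸ LinearMap.range f))

/-- The injective dimension of a module, as an element of `ℕ∞`. -/
noncomputable def injDim (M : ModuleCat.{u} R) : ℕ∞ :=
  sInf ((↑) '' {n : ℕ | idLE R n M})

/-- The global dimension (computed on finitely generated modules) is at most `n`. -/
def gldimLE (n : ℕ) : Prop :=
  ∀ M : ModuleCat.{u} R, Module.Finite R M → pdLE R n M

/-- The global dimension of `R`, computed on finitely generated modules. -/
noncomputable def globalDim : ℕ∞ :=
  sInf ((↑) '' {n : ℕ | gldimLE R n})

/-- The socle of a module: the sum of all its simple submodules. -/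
def socle (M : Type u) [AddCommGroup M] [Module R M] : Submodule R M :=
  sSup {S : Submodule R M | IsSimpleModule R S}

/-- An algebra is an Auslander algebra if its global dimension is at most `2` and
its dominant dimension is at least `2`, i.e. there is an exact sequence
`0 → R → I₀ → I₁` with `I₀`, `I₁` both projective and injective. -/
def IsAuslander : Prop :=
  gldimLE R 2 ∧
  ∃ (I₀ I₁ : ModuleCat.{u} R) (f : R →ₗ[R] I₀) (g : I₀ →ₗ[R] I₁),
    Module.Injective R I₀ ∧ Module.Projective R I₀ ∧
    Module.Injective R I₁ ∧ Module.Projective R I₁ ∧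
    Function.Injective f ∧ LinearMap.ker g = LinearMap.range f

/-- `f : M →ₗ[R] I` realizes `I` as an injective envelope of `M`: `I` is injective
and `f` is an essential embedding. -/
def IsInjectiveEnvelope {M I : Type u} [AddCommGroup M] [Module R M]
    [AddCommGroup I] [Module R I] (f : M →ₗ[R] I) : Prop :=
  Module.Injective R I ∧ Function.Injective f ∧
    ∀ N : Submodule R I, N ≠ ⊥ → N ⊓ LinearMap.range f ≠ ⊥

end Defs



section Aux

variable {R : Type u} [Ring R]

private theorem proj_of_ses {M N : Type u} [AddCommGroup M] [Module R M]
    [AddCommGroup N] [Module R N] (g : M →ₗ[R] N) (hg : Function.Surjective g)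
    (hN : Module.Projective R N) (hK : Module.Projective R (LinearMap.ker g)) :
    Module.Projective R M := by
  haveI := hN; haveI := hK
  obtain ⟨s, hs⟩ := Module.projective_lifting_property g LinearMap.id hg
  have hs' : ∀ n, g (s n) = n := fun n => DFunLike.congr_fun hs n
  let e : (↥(LinearMap.ker g) × N) →ₗ[R] M := (LinearMap.ker g).subtype.coprod s
  have hbij : Function.Bijective e := by
    constructor
    · rintro ⟨⟨a, ha⟩, n⟩ ⟨⟨b, hb⟩, m⟩ hab
      have hab' : a + s n = b + s m := hab
      have hnm : n = m := by
        have := congrArg g hab'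
        simpa [map_add, LinearMap.mem_ker.mp ha, LinearMap.mem_ker.mp hb, hs'] using this
      subst hnm
      have hab'' : a = b := add_right_cancel hab'
      simp only [Prod.mk.injEq, Subtype.mk.injEq]
      exact ⟨hab'', trivial⟩
    · intro m
      have hmem : m - s (g m) ∈ LinearMap.ker g := by
        rw [LinearMap.mem_ker, map_sub, hs', sub_self]
      refine ⟨(⟨m - s (g m), hmem⟩, g m), ?_⟩
      show (m - s (g m)) + s (g m) = m
      abel
  exact Module.Projective.of_equiv (LinearEquiv.ofBijective e hbij)

private theorem proj_of_range {A B : Type u} [AddCommGroup A] [Module R A]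
    [AddCommGroup B] [Module R B] (j : A →ₗ[R] B) (hj : Function.Injective j)
    (hA : Module.Projective R A) {p : Submodule R B} (hp : p = LinearMap.range j) :
    Module.Projective R p := by
  haveI := hA
  subst hp
  exact Module.Projective.of_equiv (LinearEquiv.ofInjective j hj)

private theorem gldimLE_of_globalDim_eq {n : ℕ} (h : globalDim R = n) : gldimLE R n := by
  set A : Set ℕ∞ := (↑) '' {m : ℕ | gldimLE R m} with hA
  have h' : sInf A = (n : ℕ∞) := h
  have hne : A.Nonempty := by
    by_contra hemp
    rw [Set.not_nonempty_iff_eq_empty] at hemp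
    rw [hemp, sInf_empty] at h'
    exact (by simp : ((⊤ : ℕ∞) ≠ n)) h'
  obtain ⟨a, haA, hmin⟩ := wellFounded_lt.has_min A hne
  have hlb : ∀ b ∈ A, a ≤ b := fun b hb => not_lt.1 (hmin b hb)
  have hsa : sInf A = a := le_antisymm (sInf_le haA) (le_sInf hlb)
  rw [hsa] at h'
  obtain ⟨m, hm, rfl⟩ := haA
  have : m = n := Nat.cast_inj.mp h'
  exact this ▸ hm

end Aux

/-- Let `Λ` be finite dimensional of global dimension `2`, and let `f : Λ → I₀` be an
injective envelope of the regular module with `I₀` projective.  Then the socle of the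
cokernel `I₀/Λ` has projective dimension at most `1`. -/
theorem stmt_14 (k Λ : Type u) [Field k] [Ring Λ] [Algebra k Λ] [FiniteDimensional k Λ]
    (hgl : globalDim Λ = 2)
    (I₀ : Type u) [AddCommGroup I₀] [Module Λ I₀]
    (f : Λ →ₗ[Λ] I₀) (henv : IsInjectiveEnvelope Λ f)
    (hproj : Module.Projective Λ I₀) :
    pdLE Λ 1 (ModuleCat.of Λ ↥(socle Λ (I₀ ⧸ LinearMap.range f))) := by
  classical
  obtain ⟨-, hfinj, hess⟩ := henv
  haveI := hproj
  -- Step 1: `I₀` is a Noetherian (hence finite) `Λ`-module.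
  obtain ⟨sec, hsec⟩ := Module.projective_def.mp hproj
  set σ : Finset I₀ := (sec (f 1)).support with hσdef
  let e : I₀ →ₗ[Λ] (↥σ → Λ) := LinearMap.pi fun j => (Finsupp.lapply (j : I₀)).comp sec
  have heker : LinearMap.ker e = ⊥ := by
    by_contra hne
    refine hess _ hne ?_
    rw [eq_bot_iff]
    rintro x ⟨hx1, a, rfl⟩
    have hx1' : e (f a) = 0 := hx1
    have hcoord : ∀ j : ↥σ, sec (f a) (j : I₀) = 0 := by
      intro j
      have := congrFun hx1' j
      simpa [e, LinearMap.pi_apply] using this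
    have hsupp : (sec (f a)).support ⊆ σ := by
      have hfa : f a = a • f 1 := by rw [← map_smul, smul_eq_mul, mul_one]
      rw [hσdef, hfa, map_smul]
      exact Finsupp.support_smul
    have hz : sec (f a) = 0 := by
      ext j
      by_cases hj : j ∈ σ
      · exact hcoord ⟨j, hj⟩
      · exact Finsupp.notMem_support_iff.mp fun hmem => hj (hsupp hmem)
    have hfa0 : f a = 0 := by
      have := hsec (f a)
      rw [hz, map_zero] at this
      exact this.symm
    rw [Submodule.mem_bot]
    exact hfa0
  have he : Function.Injective e := LinearMap.ker_eq_bot.mp heker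
  haveI : IsNoetherian Λ (↥σ → Λ) := isNoetherian_of_tower k inferInstance
  haveI : IsNoetherian Λ I₀ := isNoetherian_of_injective e he
  haveI hI₀fin : Module.Finite Λ I₀ := ⟨IsNoetherian.noetherian ⊤⟩
  -- Step 2: setup
  set C := I₀ ⧸ LinearMap.range f with hC
  set S : Submodule Λ C := socle Λ C with hSdef
  set π : I₀ →ₗ[Λ] C := (LinearMap.range f).mkQ with hπ
  haveI : Module.Finite Λ C := Module.Finite.of_surjective π (Submodule.mkQ_surjective _)
  haveI hfinQ : Module.Finite Λ (C ⧸ S) :=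
    Module.Finite.of_surjective S.mkQ (Submodule.mkQ_surjective _)
  have hgl2 : gldimLE Λ 2 := gldimLE_of_globalDim_eq hgl
  have hQ2 : pdLE Λ 2 (ModuleCat.of Λ (C ⧸ S)) := hgl2 (ModuleCat.of Λ (C ⧸ S)) hfinQ
  obtain ⟨P₀, g0, hP₀, hgsurj, hpd1⟩ := hQ2
  obtain ⟨P₁, h1m, hP₁, hhsurj, h0⟩ := hpd1
  haveI := hP₀; haveI := hP₁
  obtain ⟨ρ, hρ⟩ := Module.projective_lifting_property (M := C) S.mkQ g0
    (Submodule.mkQ_surjective S)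
  obtain ⟨τ, hτ⟩ := Module.projective_lifting_property (M := ↥P₀) g0 (S.mkQ ∘ₗ π) hgsurj
  have hρ' : ∀ p : ↥P₀, S.mkQ (ρ p) = g0 p := fun p => DFunLike.congr_fun hρ p
  have hτ' : ∀ x : I₀, g0 (τ x) = S.mkQ (π x) := fun x => DFunLike.congr_fun hτ x
  let h' : ↥P₁ →ₗ[Λ] ↥P₀ := (LinearMap.ker g0).subtype ∘ₗ h1m
  let u : (↥P₁ × I₀) →ₗ[Λ] ↥P₀ :=
    h' ∘ₗ LinearMap.fst Λ ↥P₁ I₀ + τ ∘ₗ LinearMap.snd Λ ↥P₁ I₀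
  let Φ₀ : (↥P₁ × I₀) →ₗ[Λ] C := π ∘ₗ LinearMap.snd Λ ↥P₁ I₀ - ρ ∘ₗ u
  have hgh' : ∀ p : ↥P₁, g0 (h' p) = 0 := fun p => LinearMap.mem_ker.mp (h1m p).2
  have hmemS : ∀ z : ↥P₁ × I₀, Φ₀ z ∈ S := by
    intro z
    have hq : S.mkQ (Φ₀ z) = 0 := by
      rw [show Φ₀ z = π z.2 - ρ (u z) from rfl, map_sub, hρ' (u z),
        show u z = h' z.1 + τ z.2 from rfl, map_add, hgh' z.1, hτ' z.2, zero_add, sub_self]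
    rw [← Submodule.ker_mkQ S]
    exact LinearMap.mem_ker.mpr hq
  let Φ : (↥P₁ × I₀) →ₗ[Λ] ↥S := LinearMap.codRestrict S Φ₀ hmemS
  -- Surjectivity of Φ
  have hΦsurj : Function.Surjective Φ := by
    rintro ⟨sv, hsv⟩
    obtain ⟨x, hx⟩ := Submodule.mkQ_surjective (LinearMap.range f) sv
    rw [← hπ] at hx
    have hτx : τ x ∈ LinearMap.ker g0 := by
      rw [LinearMap.mem_ker, hτ' x, hx, Submodule.mkQ_apply]
      exact (Submodule.Quotient.mk_eq_zero S).mpr hsv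
    obtain ⟨p₁, hp₁⟩ := hhsurj (-(⟨τ x, hτx⟩ : ↥(LinearMap.ker g0)))
    refine ⟨(p₁, x), Subtype.ext ?_⟩
    have hval : h' p₁ = -(τ x) := by
      show (LinearMap.ker g0).subtype (h1m p₁) = -(τ x)
      rw [hp₁]
      rfl
    show Φ₀ (p₁, x) = sv
    rw [show Φ₀ (p₁, x) = π x - ρ (h' p₁ + τ x) from rfl, hval, neg_add_cancel, map_zero,
      sub_zero]
    exact hx
  -- The auxiliary module W
  let γ : (I₀ × ↥P₀) →ₗ[Λ] C := π ∘ₗ LinearMap.fst Λ I₀ ↥P₀ - ρ ∘ₗ LinearMap.snd Λ I₀ ↥P₀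
  set W : Submodule Λ (I₀ × ↥P₀) := LinearMap.ker γ with hW
  let w : ↥W →ₗ[Λ] ↥P₀ := LinearMap.snd Λ I₀ ↥P₀ ∘ₗ W.subtype
  have hwsurj : Function.Surjective w := by
    intro p
    obtain ⟨x, hx⟩ := Submodule.mkQ_surjective (LinearMap.range f) (ρ p)
    rw [← hπ] at hx
    have hmem : (x, p) ∈ W := by
      rw [hW, LinearMap.mem_ker]
      show π x - ρ p = 0
      rw [hx, sub_self]
    exact ⟨⟨(x, p), hmem⟩, rfl⟩
  let jΛ : Λ →ₗ[Λ] ↥W := LinearMap.codRestrict W (LinearMap.inl Λ I₀ ↥P₀ ∘ₗ f) (by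
    intro a
    rw [hW, LinearMap.mem_ker]
    show π (f a) - ρ 0 = 0
    rw [map_zero, sub_zero, hπ, Submodule.mkQ_apply]
    exact (Submodule.Quotient.mk_eq_zero _).mpr ⟨a, rfl⟩)
  have hjΛ : Function.Injective jΛ := by
    intro a b hab
    have h2 : ((f a, (0 : ↥P₀)) : I₀ × ↥P₀) = (f b, 0) := congrArg Subtype.val hab
    exact hfinj (Prod.ext_iff.mp h2).1
  have hkerw : LinearMap.ker w = LinearMap.range jΛ := by
    ext z
    obtain ⟨⟨x, p⟩, hz⟩ := z
    simp only [LinearMap.mem_ker, LinearMap.mem_range]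
    constructor
    · intro hp
      have hp0 : p = 0 := hp
      have hzz : π x - ρ p = 0 := by
        have h2 := hz
        rw [hW, LinearMap.mem_ker] at h2
        exact h2
      rw [hp0, map_zero, sub_zero] at hzz
      have hxr : x ∈ LinearMap.range f := by
        rw [← Submodule.ker_mkQ (LinearMap.range f), LinearMap.mem_ker]
        rw [hπ] at hzz
        exact hzz
      obtain ⟨a, ha⟩ := hxr
      refine ⟨a, Subtype.ext ?_⟩
      show ((f a, (0 : ↥P₀)) : I₀ × ↥P₀) = (x, p)
      rw [ha, hp0]
    · rintro ⟨a, ha⟩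
      have h2 : ((f a, (0 : ↥P₀)) : I₀ × ↥P₀) = (x, p) := congrArg Subtype.val ha
      show p = 0
      exact (Prod.ext_iff.mp h2).2.symm
  have hWproj : Module.Projective Λ ↥W :=
    proj_of_ses w hwsurj hP₀ (proj_of_range jΛ hjΛ inferInstance hkerw)
  -- β : ker Φ → W
  let b0 : (↥P₁ × I₀) →ₗ[Λ] (I₀ × ↥P₀) := LinearMap.prod (LinearMap.snd Λ ↥P₁ I₀) u
  have hb0mem : ∀ z : ↥(LinearMap.ker Φ), (b0 ∘ₗ (LinearMap.ker Φ).subtype) z ∈ W := by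
    rintro ⟨z, hzmem⟩
    rw [hW, LinearMap.mem_ker]
    show π z.2 - ρ (u z) = 0
    have hz0 : Φ₀ z = 0 := congrArg Subtype.val (LinearMap.mem_ker.mp hzmem)
    exact hz0
  let β : ↥(LinearMap.ker Φ) →ₗ[Λ] ↥W :=
    LinearMap.codRestrict W (b0 ∘ₗ (LinearMap.ker Φ).subtype) hb0mem
  have hβsurj : Function.Surjective β := by
    rintro ⟨⟨x, p⟩, hz⟩
    have hzk : π x - ρ p = 0 := by
      have h2 := hz
      rw [hW, LinearMap.mem_ker] at h2
      exact h2
    have hπx : π x = ρ p := by rwa [sub_eq_zero] at hzk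
    have hpτ : p - τ x ∈ LinearMap.ker g0 := by
      rw [LinearMap.mem_ker, map_sub, hτ' x, hπx, hρ' p, sub_self]
    obtain ⟨p₁, hp₁⟩ := hhsurj ⟨p - τ x, hpτ⟩
    have hval : h' p₁ = p - τ x := by
      show (LinearMap.ker g0).subtype (h1m p₁) = p - τ x
      rw [hp₁]
      rfl
    have hmem : (p₁, x) ∈ LinearMap.ker Φ := by
      rw [LinearMap.mem_ker]
      apply Subtype.ext
      show Φ₀ (p₁, x) = 0
      show π x - ρ (h' p₁ + τ x) = 0
      rw [hval, show p - τ x + τ x = p from by abel, hπx, sub_self]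
    refine ⟨⟨(p₁, x), hmem⟩, Subtype.ext ?_⟩
    show ((x, u (p₁, x)) : I₀ × ↥P₀) = (x, p)
    have hup : u (p₁, x) = p := by
      show h' p₁ + τ x = p
      rw [hval]
      abel
    rw [hup]
  -- jL : ker h1m → ker Φ
  have hjLmem : ∀ l : ↥(LinearMap.ker h1m),
      (LinearMap.inl Λ ↥P₁ I₀ ∘ₗ (LinearMap.ker h1m).subtype) l ∈ LinearMap.ker Φ := by
    rintro ⟨l, hl⟩
    rw [LinearMap.mem_ker]
    apply Subtype.ext
    show Φ₀ (l, 0) = 0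
    show π 0 - ρ (h' l + τ 0) = 0
    have h0l : h' l = 0 := by
      show (LinearMap.ker g0).subtype (h1m l) = 0
      rw [LinearMap.mem_ker.mp hl]
      rfl
    rw [h0l, map_zero, map_zero, add_zero, map_zero, sub_zero]
  let jL : ↥(LinearMap.ker h1m) →ₗ[Λ] ↥(LinearMap.ker Φ) :=
    LinearMap.codRestrict (LinearMap.ker Φ) (LinearMap.inl Λ ↥P₁ I₀ ∘ₗ (LinearMap.ker h1m).subtype)
      hjLmem
  have hjL : Function.Injective jL := by
    intro a b hab
    apply Subtype.ext
    have h2 : (((a : ↥P₁), (0 : I₀)) : ↥P₁ × I₀) = ((b : ↥P₁), 0) := congrArg Subtype.val hab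
    exact (Prod.ext_iff.mp h2).1
  have hkerβ : LinearMap.ker β = LinearMap.range jL := by
    ext z
    obtain ⟨⟨p₁, x⟩, hz⟩ := z
    simp only [LinearMap.mem_ker, LinearMap.mem_range]
    constructor
    · intro hb
      have hb' : ((x, u (p₁, x)) : I₀ × ↥P₀) = (0, 0) := congrArg Subtype.val hb
      have hx0 : x = 0 := (Prod.ext_iff.mp hb').1
      have hu0 : u (p₁, x) = 0 := (Prod.ext_iff.mp hb').2
      have hh0 : h1m p₁ = 0 := by
        apply Subtype.ext
        have h3 : h' p₁ + τ x = 0 := hu0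
        rw [hx0, map_zero, add_zero] at h3
        exact h3
      refine ⟨⟨p₁, LinearMap.mem_ker.mpr hh0⟩, Subtype.ext ?_⟩
      show ((p₁, (0 : I₀)) : ↥P₁ × I₀) = (p₁, x)
      rw [hx0]
    · rintro ⟨⟨l, hl⟩, ha⟩
      have hpair : ((l, (0 : I₀)) : ↥P₁ × I₀) = (p₁, x) := congrArg Subtype.val ha
      have hl1 : l = p₁ := (Prod.ext_iff.mp hpair).1
      have hl2 : (0 : I₀) = x := (Prod.ext_iff.mp hpair).2
      apply Subtype.ext
      show ((x, u (p₁, x)) : I₀ × ↥P₀) = 0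
      have hx0 : x = 0 := hl2.symm
      have hh0 : h1m p₁ = 0 := by rw [← hl1]; exact LinearMap.mem_ker.mp hl
      have hu0 : u (p₁, x) = 0 := by
        show h' p₁ + τ x = 0
        have hhp : h' p₁ = 0 := by
          show (LinearMap.ker g0).subtype (h1m p₁) = 0
          rw [hh0]
          rfl
        rw [hhp, hx0, map_zero, add_zero]
      rw [hu0, hx0]
      rfl
  have hkerΦproj : Module.Projective Λ ↥(LinearMap.ker Φ) :=
    proj_of_ses β hβsurj hWproj (proj_of_range jL hjL h0 hkerβ)
  -- Conclusion
  exact ⟨ModuleCat.of Λ (↥P₁ × I₀), Φ,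
    (inferInstance : Module.Projective Λ (↥P₁ × I₀)), hΦsurj, hkerΦproj⟩
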